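/- Let (A,V) and (B,W) be permutation groups, both different from I₁ (that is, |V| ≥ 2 and |W| ≥ 2). Then the direct product A × B belongs to GR if and only if none of the following three cases holds: (i) A ∉ DGR or B ∉ DGR; (ii) one of the two groups belongs to GR and has all its Or-orbitals self-paired, while the other does not belong to GR ∪ {I₂}; (iii) A, B ∈ DGR \ (GR ∪ {I₂}) and there exist a ∈ Ā \ A which pairs all the pairs of paired Or-orbitals of A and b ∈ B̄ \ B which pairs all the pairs of paired Or-orbitals of B. -/

import Mathlib

/-- A permutation `σ` is an automorphism of the edge-colored graph on `V`
with edge-color function `E`. -/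
def IsGraphAut {V C : Type} (E : Sym2 V → C) (σ : Equiv.Perm V) : Prop :=
  ∀ v w : V, v ≠ w → E s(σ v, σ w) = E s(v, w)

/-- A permutation `σ` is an automorphism of the edge-colored digraph on `V`
with edge-color function `E`. -/
def IsDigraphAut {V C : Type} (E : V × V → C) (σ : Equiv.Perm V) : Prop :=
  ∀ v w : V, v ≠ w → E (σ v, σ w) = E (v, w)

/-- A permutation group `(A, V)` belongs to the class `GR` iff it is the
automorphism group of an edge-colored graph on `V`. -/
def IsGR {V : Type} (A : Subgroup (Equiv.Perm V)) : Prop :=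
  ∃ (C : Type) (E : Sym2 V → C), ∀ σ : Equiv.Perm V, σ ∈ A ↔ IsGraphAut E σ

/-- A permutation group `(A, V)` belongs to the class `DGR` iff it is the
automorphism group of an edge-colored digraph on `V`. -/
def IsDGR {V : Type} (A : Subgroup (Equiv.Perm V)) : Prop :=
  ∃ (C : Type) (E : V × V → C), ∀ σ : Equiv.Perm V, σ ∈ A ↔ IsDigraphAut E σ

/-- The product-action homomorphism `Perm V × Perm W →* Perm (V × W)`,
`(a, b) (x, y) = (a x, b y)`. -/
def permProdHom (V W : Type) : Equiv.Perm V × Equiv.Perm W →* Equiv.Perm (V × W) where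
  toFun p := Equiv.prodCongr p.1 p.2
  map_one' := Equiv.ext fun _ => rfl
  map_mul' _ _ := Equiv.ext fun _ => rfl

/-- The direct product of the permutation groups `(A, V)` and `(B, W)`,
acting on `V × W` with the product action. -/
def PermProd {V W : Type} (A : Subgroup (Equiv.Perm V)) (B : Subgroup (Equiv.Perm W)) :
    Subgroup (Equiv.Perm (V × W)) :=
  (A.prod B).map (permProdHom V W)

/-- The Or-orbital of the ordered pair `(v₁, v₂)` under `A`. -/
def Orbital {V : Type} (A : Subgroup (Equiv.Perm V)) (v₁ v₂ : V) : Set (V × V) :=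
  {p | ∃ a ∈ A, p = (a v₁, a v₂)}

/-- The Or-orbital of `(v₁, v₂)` is self-paired: it coincides with the orbital
consisting of the reversed pairs. -/
def SelfPaired {V : Type} (A : Subgroup (Equiv.Perm V)) (v₁ v₂ : V) : Prop :=
  Orbital A v₁ v₂ = Orbital A v₂ v₁

/-- The orbit of `v` under the permutation group `A`. -/
def OrbitOf {V : Type} (A : Subgroup (Equiv.Perm V)) (v : V) : Set V :=
  {x | ∃ a ∈ A, x = a v}

/-- `σ` maps every NOr-orbital (orbit on unordered pairs of distinct elements)
of `A` onto itself. -/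
def PreservesNOrOrbitals {V : Type} (A : Subgroup (Equiv.Perm V)) (σ : Equiv.Perm V) : Prop :=
  ∀ v w : V, v ≠ w → ∃ a ∈ A, s(σ v, σ w) = s(a v, a w)

/-- `σ` maps every Or-orbital (orbit on ordered pairs of distinct elements)
of `A` onto itself. -/
def PreservesOrOrbitals {V : Type} (A : Subgroup (Equiv.Perm V)) (σ : Equiv.Perm V) : Prop :=
  ∀ v w : V, v ≠ w → ∃ a ∈ A, σ v = a v ∧ σ w = a w

/-- `Ā`: the set of all permutations of `V` mapping every NOr-orbital of `A`
onto itself (the smallest group in `GR` containing `A`). -/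
def grClosure {V : Type} (A : Subgroup (Equiv.Perm V)) : Set (Equiv.Perm V) :=
  {σ | PreservesNOrOrbitals A σ}

/-- `σ` pairs all the pairs of paired Or-orbitals of `A`: for every
non-self-paired Or-orbital `O`, the image of `O` under `σ` is the paired
orbital `O*`. -/
def PairsAllPairedOrbitals {V : Type} (A : Subgroup (Equiv.Perm V)) (σ : Equiv.Perm V) : Prop :=
  ∀ v₁ v₂ : V, v₁ ≠ v₂ → ¬ SelfPaired A v₁ v₂ →
    (fun p : V × V => (σ p.1, σ p.2)) '' Orbital A v₁ v₂ = Orbital A v₂ v₁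

/-- The permutation group `(A, V)` is the group `I₂`: the trivial group acting
on a two-element set. -/
def IsI₂ {V : Type} [Fintype V] (A : Subgroup (Equiv.Perm V)) : Prop :=
  Fintype.card V = 2 ∧ A = ⊥

open Equiv

section Auxiliary

variable {V : Type} {A : Subgroup (Equiv.Perm V)}


variable {V : Type} {A : Subgroup (Equiv.Perm V)}

lemma isGR_iff : IsGR A ↔ ∀ σ, PreservesNOrOrbitals A σ → σ ∈ A := by
  constructor
  · rintro ⟨C, E, hE⟩ σ hσ
    refine (hE σ).mpr fun v w hvw => ?_
    obtain ⟨a, ha, heq⟩ := hσ v w hvw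
    rw [heq]
    exact (hE a).mp ha v w hvw
  · intro h
    refine ⟨Set (Sym2 V), fun s => {t | ∃ a ∈ A, t = s.map a}, fun σ => ⟨fun hσ v w hvw => ?_, fun hσ => ?_⟩⟩
    · ext t
      simp only [Set.mem_setOf_eq, Sym2.map_pair_eq]
      constructor
      · rintro ⟨a, ha, rfl⟩
        exact ⟨a * σ, A.mul_mem ha hσ, by simp [Perm.mul_apply]⟩
      · rintro ⟨a, ha, rfl⟩
        exact ⟨a * σ⁻¹, A.mul_mem ha (A.inv_mem hσ), by simp [Perm.mul_apply]⟩
    · apply h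
      intro v w hvw
      have h1 : s(σ v, σ w) ∈ {t | ∃ a ∈ A, t = (s(σ v, σ w)).map a} :=
        ⟨1, A.one_mem, by simp [Sym2.map_pair_eq]⟩
      have h2 : ({t | ∃ a ∈ A, t = Sym2.map (⇑a) s(σ v, σ w)} : Set (Sym2 V)) =
          {t | ∃ a ∈ A, t = Sym2.map (⇑a) s(v, w)} := hσ v w hvw
      rw [h2] at h1
      obtain ⟨a, ha, heq⟩ := h1
      exact ⟨a, ha, by rw [heq, Sym2.map_pair_eq]⟩

lemma isDGR_iff : IsDGR A ↔ ∀ σ, PreservesOrOrbitals A σ → σ ∈ A := by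
  constructor
  · rintro ⟨C, E, hE⟩ σ hσ
    refine (hE σ).mpr fun v w hvw => ?_
    obtain ⟨a, ha, h1, h2⟩ := hσ v w hvw
    rw [h1, h2]
    exact (hE a).mp ha v w hvw
  · intro h
    refine ⟨Set (V × V), fun p => {q | ∃ a ∈ A, q = (a p.1, a p.2)}, fun σ => ⟨fun hσ v w hvw => ?_, fun hσ => ?_⟩⟩
    · ext q
      simp only [Set.mem_setOf_eq]
      constructor
      · rintro ⟨a, ha, rfl⟩
        exact ⟨a * σ, A.mul_mem ha hσ, by simp [Perm.mul_apply]⟩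
      · rintro ⟨a, ha, rfl⟩
        exact ⟨a * σ⁻¹, A.mul_mem ha (A.inv_mem hσ), by simp [Perm.mul_apply]⟩
    · apply h
      intro v w hvw
      have h1 : (σ v, σ w) ∈ {q : V × V | ∃ a ∈ A, q = (a (σ v), a (σ w))} :=
        ⟨1, A.one_mem, by simp⟩
      have h2 : ({q : V × V | ∃ a ∈ A, q = (a (σ v), a (σ w))}) =
          {q : V × V | ∃ a ∈ A, q = (a v, a w)} := hσ v w hvw
      rw [h2] at h1
      obtain ⟨a, ha, heq⟩ := h1
      exact ⟨a, ha, congrArg Prod.fst heq, congrArg Prod.snd heq⟩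

lemma selfPaired_iff {v w : V} : SelfPaired A v w ↔ ∃ a ∈ A, a v = w ∧ a w = v := by
  constructor
  · intro h
    have h1 : ((w, v) : V × V) ∈ Orbital A w v := ⟨1, A.one_mem, by simp⟩
    rw [← h] at h1
    obtain ⟨a, ha, heq⟩ := h1
    exact ⟨a, ha, (congrArg Prod.fst heq).symm, (congrArg Prod.snd heq).symm⟩
  · rintro ⟨a, ha, hav, haw⟩
    ext p
    constructor
    · rintro ⟨c, hc, rfl⟩
      have h1 : a⁻¹ w = v := by rw [← hav]; simp
      have h2 : a⁻¹ v = w := by rw [← haw]; simp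
      exact ⟨c * a⁻¹, A.mul_mem hc (A.inv_mem ha), by simp [Perm.mul_apply, h1, h2]⟩
    · rintro ⟨c, hc, rfl⟩
      exact ⟨c * a, A.mul_mem hc ha, by simp [Perm.mul_apply, hav, haw]⟩

/-- Elements of the GR-closure preserve orbits, provided `|V| ≥ 3`. -/
lemma grClosure_mem_orbit [Fintype V] (hcard : 3 ≤ Fintype.card V)
    {f : Perm V} (hf : f ∈ grClosure A) (v : V) : ∃ a ∈ A, f v = a v := by
  by_contra hno
  push_neg at hno
  -- for every x ≠ v, the Sym2 equality must be crossed
  have key : ∀ x : V, x ≠ v → (∃ a ∈ A, f v = a x ∧ f x = a v) := by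
    intro x hx
    obtain ⟨a, ha, heq⟩ := hf v x (Ne.symm hx)
    rcases Sym2.eq_iff.mp heq with ⟨h1, h2⟩ | ⟨h1, h2⟩
    · exact absurd h1 (hno a ha)
    · exact ⟨a, ha, h1, h2⟩
  obtain ⟨x, y, hxv, hyv, hxy⟩ :
      ∃ x y : V, x ≠ v ∧ y ≠ v ∧ x ≠ y := by
    classical
    have h2 : 1 < Fintype.card ({v}ᶜ : Set V) := by
      rw [Fintype.card_compl_set]; simp; omega
    obtain ⟨⟨x, hx⟩, ⟨y, hy⟩, hne⟩ := Fintype.exists_pair_of_one_lt_card h2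
    exact ⟨x, y, hx, hy, fun h => hne (Subtype.ext h)⟩
  obtain ⟨a, ha, hav, hax⟩ := key x hxv
  obtain ⟨a', ha', hav', hay⟩ := key y hyv
  -- f x = a v, f y = a' v; consider the pair (x, y)
  obtain ⟨b, hb, heq⟩ := hf x y hxy
  rcases Sym2.eq_iff.mp heq with ⟨h1, h2⟩ | ⟨h1, h2⟩
  · -- f x = b x, so a v = b x, so f v = a x and x = b⁻¹ a v: f v = a (b⁻¹ (a v)) ∈ orbit v
    apply hno (a * b⁻¹ * a) (A.mul_mem (A.mul_mem ha (A.inv_mem hb)) ha)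
    have hx' : b⁻¹ (a v) = x := by rw [← hax, h1]; simp
    rw [hav]
    simp only [Perm.mul_apply]
    rw [hx']
  · -- f x = b y, so a v = b y, y = b⁻¹ a v, f v = a' y = a' (b⁻¹ (a v))
    apply hno (a' * b⁻¹ * a) (A.mul_mem (A.mul_mem ha' (A.inv_mem hb)) ha)
    have hy' : b⁻¹ (a v) = y := by rw [← hax, h1]; simp
    rw [hav']
    simp only [Perm.mul_apply]
    rw [hy']

lemma isGR_top : IsGR (⊤ : Subgroup (Perm V)) :=
  isGR_iff.mpr fun _ _ => Subgroup.mem_top _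

lemma subgroup_card_two [Fintype V] (h : Fintype.card V = 2)
    (H : Subgroup (Perm V)) : H = ⊥ ∨ H = ⊤ := by
  classical
  have hcard : Nat.card (Perm V) = 2 := by
    rw [Nat.card_eq_fintype_card, Fintype.card_perm, h]
    rfl
  have hdvd : Nat.card H ∣ 2 := hcard ▸ Subgroup.card_subgroup_dvd_card H
  rcases Nat.prime_two.eq_one_or_self_of_dvd _ hdvd with h1 | h2
  · exact Or.inl (Subgroup.card_eq_one.mp h1)
  · right
    have : Nat.card H = Nat.card (Perm V) := by rw [h2, hcard]
    exact (Subgroup.card_eq_iff_eq_top H).mp this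

lemma three_le_card [Fintype V] (h2 : 2 ≤ Fintype.card V)
    (hGR : ¬ IsGR A) (hI : ¬ IsI₂ A) : 3 ≤ Fintype.card V := by
  rcases lt_or_ge (Fintype.card V) 3 with h | h
  · have hc : Fintype.card V = 2 := by omega
    rcases subgroup_card_two hc A with rfl | rfl
    · exact absurd ⟨hc, rfl⟩ hI
    · exact absurd isGR_top hGR
  · exact h

/-- If `A` is `I₂` then any orbit-preserving permutation is the identity. -/
lemma eq_one_of_orbit_bot {f : Perm V} (hf : ∀ v, ∃ a ∈ (⊥ : Subgroup (Perm V)), f v = a v) :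
    f = 1 := by
  ext v
  obtain ⟨a, ha, hfa⟩ := hf v
  rw [Subgroup.mem_bot] at ha
  subst ha
  simpa using hfa

section Prod
variable {W : Type} {B : Subgroup (Equiv.Perm W)}

lemma prodCongr_mem_permProd {f : Perm V} {g : Perm W} (hf : f ∈ A) (hg : g ∈ B) :
    Equiv.prodCongr f g ∈ PermProd A B :=
  ⟨(f, g), Subgroup.mem_prod.mpr ⟨hf, hg⟩, rfl⟩

lemma mem_of_prodCongr_mem_permProd [Nonempty V] [Nonempty W] {f : Perm V} {g : Perm W}
    (h : Equiv.prodCongr f g ∈ PermProd A B) : f ∈ A ∧ g ∈ B := by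
  obtain ⟨⟨a, b⟩, hab, heq⟩ := h
  obtain ⟨ha, hb⟩ := Subgroup.mem_prod.mp hab
  have hfa : f = a := by
    ext v
    obtain ⟨w⟩ := ‹Nonempty W›
    have := congrArg (fun σ : Perm (V × W) => (σ (v, w)).1) heq
    simpa [permProdHom] using this.symm
  have hgb : g = b := by
    ext w
    obtain ⟨v⟩ := ‹Nonempty V›
    have := congrArg (fun σ : Perm (V × W) => (σ (v, w)).2) heq
    simpa [permProdHom] using this.symm
  exact ⟨hfa ▸ ha, hgb ▸ hb⟩

lemma mem_permProd_iff {σ : Perm (V × W)} :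
    σ ∈ PermProd A B ↔ ∃ a ∈ A, ∃ b ∈ B, σ = Equiv.prodCongr a b := by
  constructor
  · rintro ⟨⟨a, b⟩, hab, rfl⟩
    obtain ⟨ha, hb⟩ := Subgroup.mem_prod.mp hab
    exact ⟨a, ha, b, hb, rfl⟩
  · rintro ⟨a, ha, b, hb, rfl⟩
    exact prodCongr_mem_permProd ha hb

end Prod

/-- `f` agrees with some element of `A` on the ordered pair `(v, v')`. -/
def Straight {V : Type} (A : Subgroup (Perm V)) (f : Perm V) (v v' : V) : Prop :=
  ∃ a ∈ A, f v = a v ∧ f v' = a v'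

/-- `f` agrees with some element of `A` on the reversed pair. -/
def Cross {V : Type} (A : Subgroup (Perm V)) (f : Perm V) (v v' : V) : Prop :=
  ∃ a ∈ A, f v = a v' ∧ f v' = a v

lemma straight_or_cross {f : Perm V} (hf : f ∈ grClosure A) {v v' : V} (h : v ≠ v') :
    Straight A f v v' ∨ Cross A f v v' := by
  obtain ⟨a, ha, heq⟩ := hf v v' h
  rcases Sym2.eq_iff.mp heq with ⟨h1, h2⟩ | ⟨h1, h2⟩
  · exact Or.inl ⟨a, ha, h1, h2⟩
  · exact Or.inr ⟨a, ha, h1, h2⟩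

lemma grClosure_of_straight_or_cross {f : Perm V}
    (h : ∀ v v', v ≠ v' → Straight A f v v' ∨ Cross A f v v') : f ∈ grClosure A := by
  intro v v' hvv
  rcases h v v' hvv with ⟨a, ha, h1, h2⟩ | ⟨a, ha, h1, h2⟩
  · exact ⟨a, ha, by rw [h1, h2]⟩
  · exact ⟨a, ha, by rw [h1, h2, Sym2.eq_swap]⟩

lemma cross_of_straight {f : Perm V} {v v' : V} (hsp : SelfPaired A v v')
    (h : Straight A f v v') : Cross A f v v' := by
  obtain ⟨s, hs, hsv, hsv'⟩ := selfPaired_iff.mp hsp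
  obtain ⟨a, ha, h1, h2⟩ := h
  refine ⟨a * s⁻¹, A.mul_mem ha (A.inv_mem hs), ?_, ?_⟩
  · have : s⁻¹ v' = v := by rw [← hsv]; simp
    simp [Perm.mul_apply, this, h1]
  · have : s⁻¹ v = v' := by rw [← hsv']; simp
    simp [Perm.mul_apply, this, h2]

lemma straight_of_cross {f : Perm V} {v v' : V} (hsp : SelfPaired A v v')
    (h : Cross A f v v') : Straight A f v v' := by
  obtain ⟨s, hs, hsv, hsv'⟩ := selfPaired_iff.mp hsp
  obtain ⟨a, ha, h1, h2⟩ := h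
  exact ⟨a * s, A.mul_mem ha hs, by simp [Perm.mul_apply, hsv, h1],
    by simp [Perm.mul_apply, hsv', h2]⟩

lemma selfPaired_of_cross_mem {f : Perm V} {v v' : V} (hfA : f ∈ A)
    (hc : Cross A f v v') : SelfPaired A v v' := by
  obtain ⟨a, ha, h1, h2⟩ := hc
  refine selfPaired_iff.mpr ⟨a⁻¹ * f, A.mul_mem (A.inv_mem ha) hfA, ?_, ?_⟩
  · simp [Perm.mul_apply, h1]
  · simp [Perm.mul_apply, h2]

lemma pairsAll_of_cross [Fintype V] {f : Perm V}
    (hcross : ∀ x y, x ≠ y → Cross A f x y) : PairsAllPairedOrbitals A f := by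
  intro v v' hvv _
  set F : V × V → V × V := fun p => (f p.1, f p.2) with hF
  have hFinj : Function.Injective F := by
    rintro ⟨x, y⟩ ⟨x', y'⟩ h
    simp only [hF, Prod.mk.injEq] at h
    exact Prod.ext (f.injective h.1) (f.injective h.2)
  have hsub : F '' Orbital A v v' ⊆ Orbital A v' v := by
    rintro _ ⟨⟨x, y⟩, ⟨a, ha, heq⟩, rfl⟩
    obtain ⟨rfl, rfl⟩ : x = a v ∧ y = a v' :=
      ⟨congrArg Prod.fst heq, congrArg Prod.snd heq⟩
    have hne : a v ≠ a v' := fun h => hvv (a.injective h)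
    obtain ⟨b, hb, h1, h2⟩ := hcross (a v) (a v') hne
    exact ⟨b * a, A.mul_mem hb ha, by simp [hF, Perm.mul_apply, h1, h2]⟩
  have hswap : Orbital A v' v = Prod.swap '' Orbital A v v' := by
    ext ⟨x, y⟩
    constructor
    · rintro ⟨a, ha, heq⟩
      refine ⟨(a v, a v'), ⟨a, ha, rfl⟩, ?_⟩
      simp only [Prod.swap_prod_mk]
      exact heq.symm
    · rintro ⟨⟨p, q⟩, ⟨a, ha, heq⟩, hswp⟩
      obtain ⟨rfl, rfl⟩ : p = a v ∧ q = a v' :=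
        ⟨congrArg Prod.fst heq, congrArg Prod.snd heq⟩
      obtain ⟨rfl, rfl⟩ : x = a v' ∧ y = a v :=
        ⟨(congrArg Prod.fst hswp).symm, (congrArg Prod.snd hswp).symm⟩
      exact ⟨a, ha, rfl⟩
  have h1 : (F '' Orbital A v v').ncard = (Orbital A v v').ncard :=
    Set.ncard_image_of_injective _ hFinj
  have h3 : (Orbital A v' v).ncard = (Orbital A v v').ncard := by
    rw [hswap, Set.ncard_image_of_injective _ Prod.swap_injective]
  exact Set.eq_of_subset_of_ncard_le hsub (le_of_eq (by rw [h3, h1])) (Set.toFinite _)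

lemma cross_of_pairsAll {f : Perm V} (hf : f ∈ grClosure A)
    (hp : PairsAllPairedOrbitals A f) : ∀ x y, x ≠ y → Cross A f x y := by
  intro x y hxy
  by_cases hsp : SelfPaired A x y
  · rcases straight_or_cross hf hxy with h | h
    · exact cross_of_straight hsp h
    · exact h
  · have hmem : ((f x, f y) : V × V) ∈
        (fun p : V × V => (f p.1, f p.2)) '' Orbital A x y :=
      ⟨(x, y), ⟨1, A.one_mem, by simp⟩, rfl⟩
    rw [hp x y hxy hsp] at hmem
    obtain ⟨b, hb, heq⟩ := hmem
    exact ⟨b, hb, congrArg Prod.fst heq, congrArg Prod.snd heq⟩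

lemma isGR_of_isDGR_selfPaired (hd : IsDGR A)
    (hsp : ∀ v w : V, v ≠ w → SelfPaired A v w) : IsGR A := by
  refine isGR_iff.mpr fun σ hσ => isDGR_iff.mp hd σ fun v w hvw => ?_
  rcases straight_or_cross hσ hvw with h | h
  · exact h
  · exact straight_of_cross (hsp v w hvw) h

lemma not_isGR_of_grClosure {f : Perm V} (hf : f ∈ grClosure A) (hfA : f ∉ A) : ¬ IsGR A :=
  fun h => hfA (isGR_iff.mp h f hf)

section ProdCore
variable {W : Type} {B : Subgroup (Equiv.Perm W)}

lemma prodCongr_mem_grClosure {f : Perm V} {g : Perm W}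
    (h1 : ∀ v, ∃ a ∈ A, f v = a v)
    (h2 : ∀ w, ∃ b ∈ B, g w = b w)
    (h3 : ∀ v v', v ≠ v' → Straight A f v v' ∨ Cross A f v v')
    (h4 : ∀ w w', w ≠ w' → Straight B g w w' ∨ Cross B g w w')
    (h5 : ∀ v v' w w', v ≠ v' → w ≠ w' →
        (Straight A f v v' ∧ Straight B g w w') ∨ (Cross A f v v' ∧ Cross B g w w')) :
    Equiv.prodCongr f g ∈ grClosure (PermProd A B) := by
  rintro ⟨v, w⟩ ⟨v', w'⟩ hpq
  by_cases hv : v = v'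
  · subst hv
    have hw : w ≠ w' := fun h => hpq (by rw [h])
    obtain ⟨a, ha, hav⟩ := h1 v
    rcases h4 w w' hw with ⟨b, hb, hb1, hb2⟩ | ⟨b, hb, hb1, hb2⟩
    · exact ⟨Equiv.prodCongr a b, prodCongr_mem_permProd ha hb, by
        simp only [Equiv.prodCongr_apply, Prod.map_apply]
        rw [hav, hb1, hb2]⟩
    · refine ⟨Equiv.prodCongr a b, prodCongr_mem_permProd ha hb, ?_⟩
      simp only [Equiv.prodCongr_apply, Prod.map_apply]
      rw [hav, hb1, hb2]
      exact Sym2.eq_swap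
  · by_cases hw : w = w'
    · subst hw
      obtain ⟨b, hb, hbw⟩ := h2 w
      rcases h3 v v' hv with ⟨a, ha, ha1, ha2⟩ | ⟨a, ha, ha1, ha2⟩
      · exact ⟨Equiv.prodCongr a b, prodCongr_mem_permProd ha hb, by
          simp only [Equiv.prodCongr_apply, Prod.map_apply]
          rw [hbw, ha1, ha2]⟩
      · refine ⟨Equiv.prodCongr a b, prodCongr_mem_permProd ha hb, ?_⟩
        simp only [Equiv.prodCongr_apply, Prod.map_apply]
        rw [hbw, ha1, ha2]
        exact Sym2.eq_swap
    · rcases h5 v v' w w' hv hw with ⟨⟨a, ha, ha1, ha2⟩, ⟨b, hb, hb1, hb2⟩⟩ |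
        ⟨⟨a, ha, ha1, ha2⟩, ⟨b, hb, hb1, hb2⟩⟩
      · exact ⟨Equiv.prodCongr a b, prodCongr_mem_permProd ha hb, by
          simp only [Equiv.prodCongr_apply, Prod.map_apply]
          rw [ha1, ha2, hb1, hb2]⟩
      · refine ⟨Equiv.prodCongr a b, prodCongr_mem_permProd ha hb, ?_⟩
        simp only [Equiv.prodCongr_apply, Prod.map_apply]
        rw [ha1, ha2, hb1, hb2]
        exact Sym2.eq_swap

lemma grClosure_permProd_spec {σ : Perm (V × W)} (hσ : σ ∈ grClosure (PermProd A B))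
    {p q : V × W} (hpq : p ≠ q) :
    ∃ a ∈ A, ∃ b ∈ B, s(σ p, σ q) = s(((a p.1 : V), (b p.2 : W)), ((a q.1 : V), (b q.2 : W))) := by
  obtain ⟨τ, hτ, heq⟩ := hσ p q hpq
  obtain ⟨a, ha, b, hb, rfl⟩ := mem_permProd_iff.mp hτ
  exact ⟨a, ha, b, hb, heq⟩

lemma grClosure_prod_form [Fintype V] [Fintype W]
    (hV : 2 ≤ Fintype.card V) (hW : 2 ≤ Fintype.card W)
    {σ : Perm (V × W)} (hσ : σ ∈ grClosure (PermProd A B)) :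
    ∃ (f : Perm V) (g : Perm W), ∀ v w, σ (v, w) = (f v, g w) := by
  have hVne : Nonempty V := Fintype.card_pos_iff.mp (by omega)
  have hWne : Nonempty W := Fintype.card_pos_iff.mp (by omega)
  obtain ⟨v₀⟩ := hVne
  obtain ⟨w₀⟩ := hWne
  have sub1 : ∀ (v : V) (w w' : W), (σ (v, w)).1 = (σ (v, w')).1 := by
    intro v w w'
    by_cases h : w = w'
    · rw [h]
    · obtain ⟨a, ha, b, hb, heq⟩ := grClosure_permProd_spec hσ
        (show ((v, w) : V × W) ≠ (v, w') from fun hh => h (congrArg Prod.snd hh))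
    
      rcases Sym2.eq_iff.mp heq with ⟨e1, e2⟩ | ⟨e1, e2⟩ <;>
        rw [congrArg Prod.fst e1, congrArg Prod.fst e2]
  have sub2 : ∀ (w : W) (v v' : V), (σ (v, w)).2 = (σ (v', w)).2 := by
    intro w v v'
    by_cases h : v = v'
    · rw [h]
    · obtain ⟨a, ha, b, hb, heq⟩ := grClosure_permProd_spec hσ
        (show ((v, w) : V × W) ≠ (v', w) from fun hh => h (congrArg Prod.fst hh))
      rcases Sym2.eq_iff.mp heq with ⟨e1, e2⟩ | ⟨e1, e2⟩ <;>
        rw [congrArg Prod.snd e1, congrArg Prod.snd e2]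
  set F : V → V := fun v => (σ (v, w₀)).1 with hFdef
  set G : W → W := fun w => (σ (v₀, w)).2 with hGdef
  have hkey : ∀ v w, σ (v, w) = (F v, G w) := by
    intro v w
    refine Prod.ext ?_ ?_
    · exact sub1 v w w₀
    · exact sub2 w v v₀
  have hFinj : Function.Injective F := by
    intro v v' h
    have : σ (v, w₀) = σ (v', w₀) := by
      rw [hkey, hkey, h]
    exact congrArg Prod.fst (σ.injective this)
  have hGinj : Function.Injective G := by
    intro w w' h
    have : σ (v₀, w) = σ (v₀, w') := by
      rw [hkey, hkey, h]
    exact congrArg Prod.snd (σ.injective this)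
  exact ⟨Equiv.ofBijective F ((Finite.injective_iff_bijective).mp hFinj),
    Equiv.ofBijective G ((Finite.injective_iff_bijective).mp hGinj),
    fun v w => hkey v w⟩


lemma conds_of_prod_form [Fintype V] [Fintype W]
    (hV : 2 ≤ Fintype.card V) (hW : 2 ≤ Fintype.card W)
    {σ : Perm (V × W)} (hσ : σ ∈ grClosure (PermProd A B))
    {f : Perm V} {g : Perm W} (hp : ∀ v w, σ (v, w) = (f v, g w)) :
    (∀ v, ∃ a ∈ A, f v = a v) ∧ (∀ w, ∃ b ∈ B, g w = b w) ∧
    (∀ v v', v ≠ v' → Straight A f v v' ∨ Cross A f v v') ∧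
    (∀ w w', w ≠ w' → Straight B g w w' ∨ Cross B g w w') ∧
    (∀ v v' w w', v ≠ v' → w ≠ w' →
      (Straight A f v v' ∧ Straight B g w w') ∨ (Cross A f v v' ∧ Cross B g w w')) := by
  have hVne : Nonempty V := Fintype.card_pos_iff.mp (by omega)
  have hWne : Nonempty W := Fintype.card_pos_iff.mp (by omega)
  obtain ⟨v₀⟩ := hVne
  obtain ⟨w₀⟩ := hWne
  obtain ⟨v₁, hv₁⟩ : ∃ x : V, x ≠ v₀ := Fintype.exists_ne_of_one_lt_card (by omega) v₀
  obtain ⟨w₁, hw₁⟩ : ∃ x : W, x ≠ w₀ := Fintype.exists_ne_of_one_lt_card (by omega) w₀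
  refine ⟨?_, ?_, ?_, ?_, ?_⟩
  · intro v
    obtain ⟨a, ha, b, hb, heq⟩ := grClosure_permProd_spec hσ
      (show ((v, w₀) : V × W) ≠ (v, w₁) from fun hh => hw₁ (congrArg Prod.snd hh).symm)
    rw [hp, hp] at heq
    rcases Sym2.eq_iff.mp heq with ⟨e1, _⟩ | ⟨e1, _⟩ <;>
      exact ⟨a, ha, congrArg Prod.fst e1⟩
  · intro w
    obtain ⟨a, ha, b, hb, heq⟩ := grClosure_permProd_spec hσ
      (show ((v₀, w) : V × W) ≠ (v₁, w) from fun hh => hv₁ (congrArg Prod.fst hh).symm)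
    rw [hp, hp] at heq
    rcases Sym2.eq_iff.mp heq with ⟨e1, _⟩ | ⟨e1, _⟩ <;>
      exact ⟨b, hb, congrArg Prod.snd e1⟩
  · intro v v' hvv
    obtain ⟨a, ha, b, hb, heq⟩ := grClosure_permProd_spec hσ
      (show ((v, w₀) : V × W) ≠ (v', w₀) from fun hh => hvv (congrArg Prod.fst hh))
    rw [hp, hp] at heq
    rcases Sym2.eq_iff.mp heq with ⟨e1, e2⟩ | ⟨e1, e2⟩
    · exact Or.inl ⟨a, ha, congrArg Prod.fst e1, congrArg Prod.fst e2⟩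
    · exact Or.inr ⟨a, ha, congrArg Prod.fst e1, congrArg Prod.fst e2⟩
  · intro w w' hww
    obtain ⟨a, ha, b, hb, heq⟩ := grClosure_permProd_spec hσ
      (show ((v₀, w) : V × W) ≠ (v₀, w') from fun hh => hww (congrArg Prod.snd hh))
    rw [hp, hp] at heq
    rcases Sym2.eq_iff.mp heq with ⟨e1, e2⟩ | ⟨e1, e2⟩
    · exact Or.inl ⟨b, hb, congrArg Prod.snd e1, congrArg Prod.snd e2⟩
    · exact Or.inr ⟨b, hb, congrArg Prod.snd e1, congrArg Prod.snd e2⟩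
  · intro v v' w w' hvv hww
    obtain ⟨a, ha, b, hb, heq⟩ := grClosure_permProd_spec hσ
      (show ((v, w) : V × W) ≠ (v', w') from fun hh => hvv (congrArg Prod.fst hh))
    rw [hp, hp] at heq
    rcases Sym2.eq_iff.mp heq with ⟨e1, e2⟩ | ⟨e1, e2⟩
    · exact Or.inl ⟨⟨a, ha, congrArg Prod.fst e1, congrArg Prod.fst e2⟩,
        ⟨b, hb, congrArg Prod.snd e1, congrArg Prod.snd e2⟩⟩
    · exact Or.inr ⟨⟨a, ha, congrArg Prod.fst e1, congrArg Prod.fst e2⟩,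
        ⟨b, hb, congrArg Prod.snd e1, congrArg Prod.snd e2⟩⟩

end ProdCore


end Auxiliary

/-- `A × B ∈ GR` except exactly in the cases: (i) `A ∉ DGR` or `B ∉ DGR`;
(ii) one of the groups is in `GR` with all Or-orbitals self-paired while the
other is not in `GR ∪ {I₂}`; (iii) `A, B ∈ DGR \ (GR ∪ {I₂})` and there are
`a ∈ Ā \ A`, `b ∈ B̄ \ B` pairing all the pairs of paired Or-orbitals of `A`
and of `B`, respectively. -/

theorem isGR_prod_characterization {V W : Type} [Fintype V] [Fintype W]
    (A : Subgroup (Equiv.Perm V)) (B : Subgroup (Equiv.Perm W))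
    (hV : 2 ≤ Fintype.card V) (hW : 2 ≤ Fintype.card W) :
    IsGR (PermProd A B) ↔
      ¬ ((¬ IsDGR A ∨ ¬ IsDGR B) ∨
        ((IsGR A ∧ (∀ v₁ v₂ : V, v₁ ≠ v₂ → SelfPaired A v₁ v₂) ∧
            ¬ IsGR B ∧ ¬ IsI₂ B) ∨
         (IsGR B ∧ (∀ w₁ w₂ : W, w₁ ≠ w₂ → SelfPaired B w₁ w₂) ∧
            ¬ IsGR A ∧ ¬ IsI₂ A)) ∨
        (IsDGR A ∧ ¬ IsGR A ∧ ¬ IsI₂ A ∧ IsDGR B ∧ ¬ IsGR B ∧ ¬ IsI₂ B ∧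
          (∃ a ∈ grClosure A, a ∉ A ∧ PairsAllPairedOrbitals A a) ∧
          (∃ b ∈ grClosure B, b ∉ B ∧ PairsAllPairedOrbitals B b))) := by
  haveI hVne : Nonempty V := Fintype.card_pos_iff.mp (by omega)
  haveI hWne : Nonempty W := Fintype.card_pos_iff.mp (by omega)
  constructor
  · intro hGR
    have hclos : ∀ σ, σ ∈ grClosure (PermProd A B) → σ ∈ PermProd A B :=
      fun σ hσ => isGR_iff.mp hGR σ hσ
    intro hcases
    rcases hcases with hcase1 | hcase2 | hcase3
    -- Case (i)
    · rcases hcase1 with hA | hB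
      · rw [isDGR_iff] at hA
        push_neg at hA
        obtain ⟨fp, hfp, hfpA⟩ := hA
        have hmem := hclos _ (prodCongr_mem_grClosure (A := A) (B := B)
          (f := fp) (g := (1 : Perm W))
          (fun v => by
            obtain ⟨v', hv'⟩ := Fintype.exists_ne_of_one_lt_card (by omega) v
            obtain ⟨a, ha, hh, _⟩ := hfp v v' (Ne.symm hv')
            exact ⟨a, ha, hh⟩)
          (fun w => ⟨1, B.one_mem, rfl⟩)
          (fun v v' h => Or.inl (hfp v v' h))
          (fun w w' _ => Or.inl ⟨1, B.one_mem, rfl, rfl⟩)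
          (fun v v' w w' hv hw => Or.inl ⟨hfp v v' hv, ⟨1, B.one_mem, rfl, rfl⟩⟩))
        exact hfpA (mem_of_prodCongr_mem_permProd hmem).1
      · rw [isDGR_iff] at hB
        push_neg at hB
        obtain ⟨gp, hgp, hgpB⟩ := hB
        have hmem := hclos _ (prodCongr_mem_grClosure (A := A) (B := B)
          (f := (1 : Perm V)) (g := gp)
          (fun v => ⟨1, A.one_mem, rfl⟩)
          (fun w => by
            obtain ⟨w', hw'⟩ := Fintype.exists_ne_of_one_lt_card (by omega) w
            obtain ⟨b, hb, hh, _⟩ := hgp w w' (Ne.symm hw')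
            exact ⟨b, hb, hh⟩)
          (fun v v' _ => Or.inl ⟨1, A.one_mem, rfl, rfl⟩)
          (fun w w' h => Or.inl (hgp w w' h))
          (fun v v' w w' hv hw => Or.inl ⟨⟨1, A.one_mem, rfl, rfl⟩, hgp w w' hw⟩))
        exact hgpB (mem_of_prodCongr_mem_permProd hmem).2
    -- Case (ii)
    · rcases hcase2 with ⟨_, hsp, hnGRB, hnI2B⟩ | ⟨_, hsp, hnGRA, hnI2A⟩
      · rw [isGR_iff] at hnGRB
        push_neg at hnGRB
        obtain ⟨g, hgcl, hgB⟩ := hnGRB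
        have hW3 : 3 ≤ Fintype.card W :=
          three_le_card hW (not_isGR_of_grClosure hgcl hgB) hnI2B
        have horb : ∀ w, ∃ b ∈ B, g w = b w := grClosure_mem_orbit hW3 hgcl
        have hmem := hclos _ (prodCongr_mem_grClosure (A := A) (B := B)
          (f := (1 : Perm V)) (g := g)
          (fun v => ⟨1, A.one_mem, rfl⟩)
          horb
          (fun v v' _ => Or.inl ⟨1, A.one_mem, rfl, rfl⟩)
          (fun w w' h => straight_or_cross hgcl h)
          (fun v v' w w' hv hw => by
            rcases straight_or_cross hgcl hw with h | h
            · exact Or.inl ⟨⟨1, A.one_mem, rfl, rfl⟩, h⟩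
            · obtain ⟨a, ha, hav, hav'⟩ := selfPaired_iff.mp (hsp v v' hv)
              exact Or.inr ⟨⟨a, ha, by simp [hav'], by simp [hav]⟩, h⟩))
        exact hgB (mem_of_prodCongr_mem_permProd hmem).2
      · rw [isGR_iff] at hnGRA
        push_neg at hnGRA
        obtain ⟨f, hfcl, hfA⟩ := hnGRA
        have hV3 : 3 ≤ Fintype.card V :=
          three_le_card hV (not_isGR_of_grClosure hfcl hfA) hnI2A
        have horb : ∀ v, ∃ a ∈ A, f v = a v := grClosure_mem_orbit hV3 hfcl
        have hmem := hclos _ (prodCongr_mem_grClosure (A := A) (B := B)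
          (f := f) (g := (1 : Perm W))
          horb
          (fun w => ⟨1, B.one_mem, rfl⟩)
          (fun v v' h => straight_or_cross hfcl h)
          (fun w w' _ => Or.inl ⟨1, B.one_mem, rfl, rfl⟩)
          (fun v v' w w' hv hw => by
            rcases straight_or_cross hfcl hv with h | h
            · exact Or.inl ⟨h, ⟨1, B.one_mem, rfl, rfl⟩⟩
            · obtain ⟨b, hb, hbw, hbw'⟩ := selfPaired_iff.mp (hsp w w' hw)
              exact Or.inr ⟨h, ⟨b, hb, by simp [hbw'], by simp [hbw]⟩⟩))
        exact hfA (mem_of_prodCongr_mem_permProd hmem).1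
    -- Case (iii)
    · obtain ⟨hDA, hnGA, hnI2A, hDB, hnGB, hnI2B, ⟨f, hfcl, hfA, hfp⟩, ⟨g, hgcl, hgB, hgp⟩⟩ :=
        hcase3
      have hV3 : 3 ≤ Fintype.card V := three_le_card hV hnGA hnI2A
      have hW3 : 3 ≤ Fintype.card W := three_le_card hW hnGB hnI2B
      have crossA : ∀ x y, x ≠ y → Cross A f x y := cross_of_pairsAll hfcl hfp
      have crossB : ∀ x y, x ≠ y → Cross B g x y := cross_of_pairsAll hgcl hgp
      have hmem := hclos _ (prodCongr_mem_grClosure (A := A) (B := B)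
        (f := f) (g := g)
        (grClosure_mem_orbit hV3 hfcl)
        (grClosure_mem_orbit hW3 hgcl)
        (fun v v' h => Or.inr (crossA v v' h))
        (fun w w' h => Or.inr (crossB w w' h))
        (fun v v' w w' hv hw => Or.inr ⟨crossA v v' hv, crossB w w' hw⟩))
      exact hfA (mem_of_prodCongr_mem_permProd hmem).1
  · intro hn
    rw [not_or] at hn
    obtain ⟨hn1, hn23⟩ := hn
    rw [not_or] at hn23
    obtain ⟨hn2, hn3⟩ := hn23
    rw [not_or] at hn1
    have hDGRA : IsDGR A := not_not.mp hn1.1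
    have hDGRB : IsDGR B := not_not.mp hn1.2
    rw [not_or] at hn2
    refine isGR_iff.mpr fun σ hσcl => ?_
    obtain ⟨f, g, hp⟩ := grClosure_prod_form hV hW hσcl
    obtain ⟨h1, h2, h3, h4, h5⟩ := conds_of_prod_form hV hW hσcl hp
    have hσeq : σ = Equiv.prodCongr f g := Equiv.ext fun p => by
      obtain ⟨v, w⟩ := p
      rw [hp v w]
      rfl
    have hfcl : f ∈ grClosure A := grClosure_of_straight_or_cross h3
    have hgcl : g ∈ grClosure B := grClosure_of_straight_or_cross h4
    suffices hfg : f ∈ A ∧ g ∈ B by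
      rw [hσeq]; exact prodCongr_mem_permProd hfg.1 hfg.2
    have hAstar : ∀ σ', PreservesOrOrbitals A σ' → σ' ∈ A := isDGR_iff.mp hDGRA
    have hBstar : ∀ σ', PreservesOrOrbitals B σ' → σ' ∈ B := isDGR_iff.mp hDGRB
    by_cases hfP : ∀ v v', v ≠ v' → Straight A f v v'
    · by_cases hgP : ∀ w w', w ≠ w' → Straight B g w w'
      · exact ⟨hAstar f hfP, hBstar g hgP⟩
      · -- f is genuinely in A; g is not; derive case (ii), contradiction
        exfalso
        push_neg at hgP
        obtain ⟨w₂, w₂', hww, hnstr⟩ := hgP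
        have hfA : f ∈ A := hAstar f hfP
        have hgB : g ∉ B := fun hgB => hnstr ⟨g, hgB, rfl, rfl⟩
        have hspA : ∀ v v', v ≠ v' → SelfPaired A v v' := by
          intro v v' hvv
          rcases h5 v v' w₂ w₂' hvv hww with ⟨_, hstr⟩ | ⟨hcrossf, _⟩
          · exact absurd hstr hnstr
          · exact selfPaired_of_cross_mem hfA hcrossf
        have hnI2B : ¬ IsI₂ B := by
          rintro ⟨hc, hbot⟩
          have hg1 : g = 1 := eq_one_of_orbit_bot (hbot ▸ h2)
          exact hgB (hg1 ▸ B.one_mem)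
        exact hn2.1 ⟨isGR_of_isDGR_selfPaired hDGRA hspA, hspA,
          not_isGR_of_grClosure hgcl hgB, hnI2B⟩
    · by_cases hgP : ∀ w w', w ≠ w' → Straight B g w w'
      · exfalso
        push_neg at hfP
        obtain ⟨v₂, v₂', hvv, hnstr⟩ := hfP
        have hgB : g ∈ B := hBstar g hgP
        have hfA : f ∉ A := fun hfA => hnstr ⟨f, hfA, rfl, rfl⟩
        have hspB : ∀ w w', w ≠ w' → SelfPaired B w w' := by
          intro w w' hww
          rcases h5 v₂ v₂' w w' hvv hww with ⟨hstr, _⟩ | ⟨_, hcrossg⟩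
          · exact absurd hstr hnstr
          · exact selfPaired_of_cross_mem hgB hcrossg
        have hnI2A : ¬ IsI₂ A := by
          rintro ⟨hc, hbot⟩
          have hf1 : f = 1 := eq_one_of_orbit_bot (hbot ▸ h1)
          exact hfA (hf1 ▸ A.one_mem)
        exact hn2.2 ⟨isGR_of_isDGR_selfPaired hDGRB hspB, hspB,
          not_isGR_of_grClosure hfcl hfA, hnI2A⟩
      · exfalso
        push_neg at hfP
        push_neg at hgP
        obtain ⟨v₂, v₂', hvv, hnstrA⟩ := hfP
        obtain ⟨w₂, w₂', hww, hnstrB⟩ := hgP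
        have crossA : ∀ v v', v ≠ v' → Cross A f v v' := by
          intro v v' h
          rcases h5 v v' w₂ w₂' h hww with ⟨_, hstr⟩ | ⟨hc, _⟩
          · exact absurd hstr hnstrB
          · exact hc
        have crossB : ∀ w w', w ≠ w' → Cross B g w w' := by
          intro w w' h
          rcases h5 v₂ v₂' w w' hvv h with ⟨hstr, _⟩ | ⟨_, hc⟩
          · exact absurd hstr hnstrA
          · exact hc
        have hfA : f ∉ A := fun hfA => hnstrA ⟨f, hfA, rfl, rfl⟩
        have hgB : g ∉ B := fun hgB => hnstrB ⟨g, hgB, rfl, rfl⟩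
        have hnI2A : ¬ IsI₂ A := by
          rintro ⟨hc, hbot⟩
          exact hfA ((eq_one_of_orbit_bot (hbot ▸ h1)) ▸ A.one_mem)
        have hnI2B : ¬ IsI₂ B := by
          rintro ⟨hc, hbot⟩
          exact hgB ((eq_one_of_orbit_bot (hbot ▸ h2)) ▸ B.one_mem)
        exact hn3 ⟨hDGRA, not_isGR_of_grClosure hfcl hfA, hnI2A,
          hDGRB, not_isGR_of_grClosure hgcl hgB, hnI2B,
          ⟨f, hfcl, hfA, pairsAll_of_cross crossA⟩,
          ⟨g, hgcl, hgB, pairsAll_of_cross crossB⟩⟩
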